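/- arXiv:1803.04353 — 5 statements merged into one kernel-verified Lean document; each statement's English description precedes it below -/
import Mathlib

section
/- Let J be a positive integer, A a finite set with m elements, and Γ ∈ {0,1}^{J×A} a binary matrix whose columns are pairwise distinct. Let Θ = (θ_{j,α}) be a real J×A matrix such that for each row j, all entries θ_{j,α} with Γ_{j,α}=1 are equal to a common value θ_{j,1}, and θ_{j,α'} < θ_{j,1} whenever Γ_{j,α'}=0. Define the 2^J × m matrix T(Θ) with rows indexed by binary response patterns r ∈ {0,1}^J and entries T_{r,α}(Θ) = ∏_{j : r_j = 1} θ_{j,α} (empty product equal to 1). Then T(Θ) has full column rank m, i.e., its columns are linearly independent. -/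
/-- The T-matrix of a restricted latent class model with separable Γ has full
column rank: its columns (indexed by latent classes) are linearly independent. -/
theorem stmt0 {J : ℕ} (hJ : 0 < J) {A : Type*} [Fintype A]
    (Γ : Fin J → A → Bool) (Θ : Fin J → A → ℝ) (θ1 : Fin J → ℝ)
    (hsep : ∀ α α' : A, (∀ j, Γ j α = Γ j α') → α = α')
    (heq : ∀ j α, Γ j α = true → Θ j α = θ1 j)
    (hlt : ∀ j α, Γ j α = false → Θ j α < θ1 j) :
    LinearIndependent ℝ
      (fun α : A => (fun r : Fin J → Bool => ∏ j, if r j then Θ j α else 1)) := by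
  rw [Fintype.linearIndependent_iff]
  intro c hc
  have hc' : ∀ r : Fin J → Bool,
      ∑ α, c α * ∏ j, (if r j then Θ j α else 1) = 0 := by
    intro r
    have := congrFun hc r
    simpa using this
  -- Step 1: transform to products of (Θ j α - θ1 j)
  have step1 : ∀ (S : Finset (Fin J)) (r : Fin J → Bool),
      ∑ α, c α * ((∏ j ∈ S, (if r j then Θ j α - θ1 j else 1)) *
        (∏ j ∈ Sᶜ, (if r j then Θ j α else 1))) = 0 := by
    intro S
    induction S using Finset.induction_on with
    | empty =>
      intro r
      simpa using hc' r
    | @insert j0 S hj0 ih =>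
      intro r
      have hcompl : (insert j0 S)ᶜ = Sᶜ.erase j0 := Finset.compl_insert
      have hj0c : j0 ∈ Sᶜ := Finset.mem_compl.mpr hj0
      by_cases hr : r j0 = true
      · set r' : Fin J → Bool := Function.update r j0 false with hr'def
        have h1 := ih r
        have h2 := ih r'
        have key : (∑ α, c α * ((∏ j ∈ insert j0 S, (if r j then Θ j α - θ1 j else 1)) *
              (∏ j ∈ (insert j0 S)ᶜ, (if r j then Θ j α else 1)))) =
            (∑ α, c α * ((∏ j ∈ S, (if r j then Θ j α - θ1 j else 1)) *
              (∏ j ∈ Sᶜ, (if r j then Θ j α else 1)))) -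
            θ1 j0 * (∑ α, c α * ((∏ j ∈ S, (if r' j then Θ j α - θ1 j else 1)) *
              (∏ j ∈ Sᶜ, (if r' j then Θ j α else 1)))) := by
          rw [Finset.mul_sum, ← Finset.sum_sub_distrib]
          refine Finset.sum_congr rfl fun α _ => ?_
          have hSprod : (∏ j ∈ S, (if r' j then Θ j α - θ1 j else 1)) =
              ∏ j ∈ S, (if r j then Θ j α - θ1 j else 1) := by
            refine Finset.prod_congr rfl fun j hj => ?_
            have : j ≠ j0 := fun h => hj0 (h ▸ hj)
            rw [hr'def, Function.update_of_ne this]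
          have hEprod : (∏ j ∈ Sᶜ.erase j0, (if r' j then Θ j α else 1)) =
              ∏ j ∈ Sᶜ.erase j0, (if r j then Θ j α else 1) := by
            refine Finset.prod_congr rfl fun j hj => ?_
            have : j ≠ j0 := (Finset.mem_erase.mp hj).1
            rw [hr'def, Function.update_of_ne this]
          rw [hcompl, Finset.prod_insert hj0]
          rw [← Finset.mul_prod_erase _ _ hj0c, ← Finset.mul_prod_erase _ _ hj0c]
          rw [hSprod, hEprod]
          have hr'j0 : r' j0 = false := by rw [hr'def]; simp
          rw [hr, hr'j0]
          simp only [if_true, Bool.false_eq_true, if_false]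
          ring
        rw [key, h1, h2]
        ring
      · have hrf : r j0 = false := by simpa using hr
        have key : (∑ α, c α * ((∏ j ∈ insert j0 S, (if r j then Θ j α - θ1 j else 1)) *
              (∏ j ∈ (insert j0 S)ᶜ, (if r j then Θ j α else 1)))) =
            ∑ α, c α * ((∏ j ∈ S, (if r j then Θ j α - θ1 j else 1)) *
              (∏ j ∈ Sᶜ, (if r j then Θ j α else 1))) := by
          refine Finset.sum_congr rfl fun α _ => ?_
          rw [hcompl, Finset.prod_insert hj0, ← Finset.mul_prod_erase _ _ hj0c, hrf]
          simp only [Bool.false_eq_true, if_false]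
          ring
        rw [key]; exact ih r
  have step1' : ∀ r : Fin J → Bool,
      ∑ α, c α * ∏ j, (if r j then Θ j α - θ1 j else 1) = 0 := by
    intro r
    have := step1 Finset.univ r
    simpa using this
  -- Step 2: triangular argument by strong induction on card of true-set
  have main : ∀ n : ℕ, ∀ α : A,
      (Finset.univ.filter fun j => Γ j α = true).card = n → c α = 0 := by
    intro n
    induction n using Nat.strong_induction_on with
    | _ n ih =>
      intro α hα
      have hr := step1' (fun j => !(Γ j α))
      have hz : ∀ β ∈ Finset.univ, β ≠ α →
          c β * ∏ j, (if (!(Γ j α) : Bool) then Θ j β - θ1 j else 1) = 0 := by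
        intro β _ hβ
        by_cases hsub : ∀ j, Γ j α = false → Γ j β = false
        · have hss : (Finset.univ.filter fun j => Γ j β = true) ⊂
              (Finset.univ.filter fun j => Γ j α = true) := by
            constructor
            · intro j hj
              simp only [Finset.mem_filter, Finset.mem_univ, true_and] at hj ⊢
              by_contra h
              have hα0 : Γ j α = false := by
                cases h' : Γ j α with
                | false => rfl
                | true => exact absurd h' h
              rw [hsub j hα0] at hj
              exact Bool.noConfusion hj
            · intro h
              apply hβ
              apply hsep
              intro j
              by_cases hjα : Γ j α = true
              · have : j ∈ Finset.univ.filter fun j => Γ j α = true := by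
                  simp [hjα]
                have hjβ := h this
                simp only [Finset.mem_filter, Finset.mem_univ, true_and] at hjβ
                rw [hjβ, hjα]
              · have hα0 : Γ j α = false := by
                  cases h' : Γ j α with
                  | false => rfl
                  | true => exact absurd h' hjα
                rw [hsub j hα0, hα0]
          have hcard : (Finset.univ.filter fun j => Γ j β = true).card < n := by
            rw [← hα]; exact Finset.card_lt_card hss
          rw [ih _ hcard β rfl, zero_mul]
        · push_neg at hsub
          obtain ⟨j, hj1, hj2⟩ := hsub
          have hjβ : Γ j β = true := by
            cases h' : Γ j β with
            | false => exact absurd h' hj2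
            | true => rfl
          have hfac : (if (!(Γ j α) : Bool) then Θ j β - θ1 j else 1) = 0 := by
            rw [hj1]
            simp [heq j β hjβ]
          rw [Finset.prod_eq_zero (Finset.mem_univ j) hfac, mul_zero]
      rw [Finset.sum_eq_single_of_mem α (Finset.mem_univ α) hz] at hr
      have hP : (∏ j, (if (!(Γ j α) : Bool) then Θ j α - θ1 j else 1)) ≠ 0 := by
        rw [Finset.prod_ne_zero_iff]
        intro j _
        cases h : Γ j α with
        | true => simp [h]
        | false =>
          simp only [h, Bool.not_false, if_true]
          exact sub_ne_zero.mpr (ne_of_lt (hlt j α h))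
      rcases mul_eq_zero.mp hr with h | h
      · exact h
      · exact absurd h hP
  exact fun α => main _ α rfl
end

section
/- Consider a two-parameter restricted latent class model: J items, finite class set A, Γ ∈ {0,1}^{J×A}, and for each item j two real parameters θ_j^+ > θ_j^-, with θ_{j,α} = θ_j^+ if Γ_{j,α}=1 and θ_{j,α} = θ_j^- otherwise. Define T_{r,α}(Θ) = ∏_{j: r_j=1} θ_{j,α} for r ∈ {0,1}^J. If the columns of Γ are pairwise distinct (Γ is separable), then for any two vectors p, p̄ ∈ ℝ^A, the equality T(Θ)p = T(Θ)p̄ (i.e., Σ_α T_{r,α}(Θ) p_α = Σ_α T_{r,α}(Θ) p̄_α for all r ∈ {0,1}^J) implies p = p̄. -/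
/-- In a two-parameter restricted latent class model with separable Γ and known
item parameters, the proportion parameters are identifiable. -/
theorem stmt2 {J : ℕ} {A : Type*} [Fintype A]
    (Γ : Fin J → A → Bool) (θp θm : Fin J → ℝ)
    (hθ : ∀ j, θm j < θp j)
    (hsep : ∀ α α' : A, (∀ j, Γ j α = Γ j α') → α = α')
    (p pbar : A → ℝ)
    (h : ∀ r : Fin J → Bool,
      ∑ α, (∏ j, if r j then (if Γ j α then θp j else θm j) else 1) * p α =
      ∑ α, (∏ j, if r j then (if Γ j α then θp j else θm j) else 1) * pbar α) :
    p = pbar := by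
  classical
  set θ : Fin J → A → ℝ := fun j α => if Γ j α then θp j else θm j with hθdef
  set q : A → ℝ := fun α => p α - pbar α with hqdef
  have hq : ∀ r : Fin J → Bool, ∑ α, (∏ j, if r j then θ j α else 1) * q α = 0 := by
    intro r
    have := h r
    simp only [hqdef, mul_sub, Finset.sum_sub_distrib]
    simpa [sub_eq_zero] using this
  have key : ∀ α₀, q α₀ = 0 := by
    intro α₀
    set t : Fin J → ℝ := fun j => if Γ j α₀ then θm j else θp j with htdef
    -- for each α, expand the product
    have expand : ∀ α, ∏ j, (θ j α - t j) =
        ∑ S ∈ Finset.univ.powerset, (∏ j ∈ S, θ j α) * ∏ j ∈ Finset.univ \ S, (-t j) := by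
      intro α
      have := Finset.prod_add (fun j => θ j α) (fun j => -t j) Finset.univ
      simpa [sub_eq_add_neg] using this
    have main : ∑ α, (∏ j, (θ j α - t j)) * q α = 0 := by
      have : ∑ α, (∏ j, (θ j α - t j)) * q α =
          ∑ S ∈ Finset.univ.powerset,
            (∏ j ∈ Finset.univ \ S, (-t j)) *
              ∑ α, (∏ j ∈ S, θ j α) * q α := by
        simp only [expand, Finset.sum_mul, Finset.mul_sum]
        rw [Finset.sum_comm]
        congr 1; ext S; congr 1; ext α; ring
      rw [this]
      apply Finset.sum_eq_zero
      intro S _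
      have hS : ∑ α, (∏ j ∈ S, θ j α) * q α = 0 := by
        have := hq (fun j => decide (j ∈ S))
        have heq : ∀ α, (∏ j, if decide (j ∈ S) then θ j α else 1) = ∏ j ∈ S, θ j α := by
          intro α
          simp only [decide_eq_true_eq]
          rw [Finset.prod_ite_mem, Finset.univ_inter]
        simp only [heq] at this
        exact this
      rw [hS, mul_zero]
    -- all terms with α ≠ α₀ vanish
    have hvanish : ∀ α, α ≠ α₀ → (∏ j, (θ j α - t j)) * q α = 0 := by
      intro α hα
      obtain ⟨j, hj⟩ : ∃ j, Γ j α ≠ Γ j α₀ := by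
        by_contra hc
        push_neg at hc
        exact hα (hsep α α₀ hc)
      have : θ j α - t j = 0 := by
        show (if Γ j α then θp j else θm j) - (if Γ j α₀ then θm j else θp j) = 0
        cases hΓα : Γ j α <;> cases hΓα₀ : Γ j α₀ <;>
          first
            | (exact absurd (hΓα.trans hΓα₀.symm) hj)
            | simp
      rw [Finset.prod_eq_zero (Finset.mem_univ j) this, zero_mul]
    have hmain' : (∏ j, (θ j α₀ - t j)) * q α₀ = 0 := by
      rw [← main]
      symm
      exact Finset.sum_eq_single α₀ (fun α _ hα => hvanish α hα)
        (fun hα => absurd (Finset.mem_univ α₀) hα)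
    have hne : (∏ j, (θ j α₀ - t j)) ≠ 0 := by
      apply Finset.prod_ne_zero_iff.mpr
      intro j _
      show (if Γ j α₀ then θp j else θm j) - (if Γ j α₀ then θm j else θp j) ≠ 0
      cases hΓ : Γ j α₀ <;> simp <;> linarith [hθ j]
    exact (mul_eq_zero.mp hmain').resolve_left hne
  funext α
  have := key α
  simp only [hqdef] at this
  linarith
end

section
/- In a two-parameter restricted latent class model with Γ ∈ {0,1}^{J×A} and θ_j^+ > θ_j^- for each item j, suppose p, p̄ ∈ ℝ^A satisfy Σ_α (∏_{j: r_j=1} θ_{j,α}) p_α = Σ_α (∏_{j: r_j=1} θ_{j,α}) p̄_α for every r ∈ {0,1}^J. Then for every equivalence class C of the relation 'equal Γ-columns', Σ_{α ∈ C} p_α = Σ_{α ∈ C} p̄_α. That is, the grouped proportion parameters ν over Γ-induced equivalence classes are identifiable. -/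
/-- In a two-parameter restricted latent class model, equality of response
distributions implies equality of the grouped proportion parameters over
Γ-induced equivalence classes. -/
theorem stmt4 {J : ℕ} {A : Type*} [Fintype A]
    (Γ : Fin J → A → Bool) (θp θm : Fin J → ℝ)
    (hθ : ∀ j, θm j < θp j)
    (p pbar : A → ℝ)
    (h : ∀ r : Fin J → Bool,
      ∑ α, (∏ j, if r j then (if Γ j α then θp j else θm j) else 1) * p α =
      ∑ α, (∏ j, if r j then (if Γ j α then θp j else θm j) else 1) * pbar α) :
    ∀ α : A,
      ∑ α' ∈ Finset.univ.filter (fun α' => ∀ j, Γ j α' = Γ j α), p α' =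
      ∑ α' ∈ Finset.univ.filter (fun α' => ∀ j, Γ j α' = Γ j α), pbar α' := by
  intro α
  set q : A → ℝ := fun α' => p α' - pbar α' with hq
  have h0 : ∀ r : Fin J → Bool,
      ∑ α', (∏ j, if r j then (if Γ j α' then θp j else θm j) else 1) * q α' = 0 := by
    intro r
    simp only [hq, mul_sub, Finset.sum_sub_distrib]
    rw [h r]; ring
  set a : A → Fin J → ℝ := fun α' j => if Γ j α' then θp j else θm j with ha
  set s : Fin J → ℝ := fun j => if Γ j α then θm j else θp j with hs
  have key : ∑ α', (∏ j, (a α' j - s j)) * q α' = 0 := by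
    have expand : ∀ α' : A, ∏ j, (a α' j - s j)
        = ∑ t ∈ Finset.univ.powerset,
            (∏ j ∈ t, a α' j) * ∏ j ∈ Finset.univ \ t, (-s j) := by
      intro α'
      simpa [sub_eq_add_neg] using
        Finset.prod_add (fun j => a α' j) (fun j => -s j) Finset.univ
    calc ∑ α', (∏ j, (a α' j - s j)) * q α'
        = ∑ α', ∑ t ∈ Finset.univ.powerset,
            ((∏ j ∈ t, a α' j) * ∏ j ∈ Finset.univ \ t, (-s j)) * q α' := by
          simp_rw [expand, Finset.sum_mul]
      _ = ∑ t ∈ Finset.univ.powerset, (∏ j ∈ Finset.univ \ t, (-s j)) *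
            ∑ α', (∏ j ∈ t, a α' j) * q α' := by
          rw [Finset.sum_comm]
          refine Finset.sum_congr rfl fun t _ => ?_
          rw [Finset.mul_sum]
          exact Finset.sum_congr rfl fun α' _ => by ring
      _ = 0 := by
          refine Finset.sum_eq_zero fun t _ => ?_
          have ht := h0 (fun j => decide (j ∈ t))
          have hrw : ∀ α' : A,
              (∏ j, if decide (j ∈ t) then (if Γ j α' then θp j else θm j) else 1)
                = ∏ j ∈ t, a α' j := by
            intro α'
            simp only [decide_eq_true_eq]
            rw [← Finset.univ_inter t, ← Finset.prod_ite_mem Finset.univ t (a α')]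
            simp [ha]
          simp_rw [hrw] at ht
          rw [ht, mul_zero]
  set c : ℝ := ∏ j, (if Γ j α then θp j - θm j else θm j - θp j) with hc
  have hceval : ∀ α' : A, (∏ j, (a α' j - s j))
      = if (∀ j, Γ j α' = Γ j α) then c else 0 := by
    intro α'
    by_cases hcl : ∀ j, Γ j α' = Γ j α
    · rw [if_pos hcl, hc]
      refine Finset.prod_congr rfl fun j _ => ?_
      simp only [ha, hs, hcl j]
      cases Γ j α <;> simp
    · rw [if_neg hcl]
      push_neg at hcl
      obtain ⟨j, hj⟩ := hcl
      refine Finset.prod_eq_zero (Finset.mem_univ j) ?_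
      simp only [ha, hs]
      cases hg : Γ j α <;> cases hg' : Γ j α' <;> simp_all
  have hc0 : c ≠ 0 := by
    rw [hc]
    refine Finset.prod_ne_zero_iff.mpr fun j _ => ?_
    have := hθ j
    cases Γ j α <;> simp <;> linarith
  have hsum : c * ∑ α' ∈ Finset.univ.filter (fun α' => ∀ j, Γ j α' = Γ j α), q α' = 0 := by
    rw [Finset.mul_sum, ← key]
    rw [← Finset.sum_filter_add_sum_filter_not Finset.univ
      (fun α' => ∀ j, Γ j α' = Γ j α) (fun α' => (∏ j, (a α' j - s j)) * q α')]
    rw [show (∑ α' ∈ Finset.univ.filter (fun α' => ¬ ∀ j, Γ j α' = Γ j α),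
        (∏ j, (a α' j - s j)) * q α') = 0 from
      Finset.sum_eq_zero fun α' hα' => by
        rw [hceval α', if_neg (Finset.mem_filter.mp hα').2, zero_mul], add_zero]
    refine Finset.sum_congr rfl fun α' hα' => ?_
    rw [hceval α', if_pos (Finset.mem_filter.mp hα').2]
  have : ∑ α' ∈ Finset.univ.filter (fun α' => ∀ j, Γ j α' = Γ j α), q α' = 0 := by
    rcases mul_eq_zero.mp hsum with h' | h'
    · exact absurd h' hc0
    · exact h'
  simp only [hq, Finset.sum_sub_distrib] at this
  linarith
end

section
/- Let Q ∈ {0,1}^{J×K} with rows q_1,…,q_J, and define the conjunctive ideal response matrix Γ ∈ {0,1}^{J×2^K} with columns indexed by all α ∈ {0,1}^K, via Γ_{j,α} = 1 iff q_j ⪯ α. Then the columns of Γ are pairwise distinct if and only if for every attribute k ∈ {1,…,K} there exists an item j with q_j = e_k (the k-th standard unit vector). In particular, if some e_k is not a row of Q, then the columns of Γ indexed by the zero vector and by e_k coincide. -/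
lemma stmt10_aux {J K : ℕ} (q : Fin J → Fin K → Bool) (k : Fin K)
    (h : ¬ ∃ j : Fin J, q j = fun k' => decide (k' = k)) (j : Fin J) :
    ((∀ k', q j k' = true → (decide (k' = k) : Bool) = true) ↔
      (∀ k', q j k' = true → (false : Bool) = true)) := by
  constructor
  · intro h1 k' hk'
    exfalso
    apply h
    have hkk : k' = k := of_decide_eq_true (h1 k' hk')
    subst hkk
    refine ⟨j, funext fun k'' => ?_⟩
    by_cases hq : q j k'' = true
    · have : k'' = k' := of_decide_eq_true (h1 k'' hq)
      subst this
      simp [hq]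
    · simp only [Bool.not_eq_true] at hq
      rw [hq]
      symm
      simp only [decide_eq_false_iff_not]
      intro hne
      subst hne
      simp [hk'] at hq
  · intro h1 k' hk'
    exact absurd (h1 k' hk') (by simp)

/-- Over the saturated class space {0,1}^K, the conjunctive ideal response
matrix Γ has pairwise distinct columns iff Q contains every unit vector e_k as
a row (Q is complete); if some e_k is missing, the columns indexed by 0 and e_k
coincide. -/
theorem stmt10 {J K : ℕ} (q : Fin J → Fin K → Bool) :
    ((∀ α α' : Fin K → Bool,
        (∀ j, ((∀ k, q j k = true → α k = true) ↔ (∀ k, q j k = true → α' k = true))) →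
        α = α') ↔
      ∀ k : Fin K, ∃ j : Fin J, q j = fun k' => decide (k' = k)) ∧
    ∀ k : Fin K, (¬ ∃ j : Fin J, q j = fun k' => decide (k' = k)) →
      ∀ j : Fin J,
        ((∀ k', q j k' = true → (decide (k' = k) : Bool) = true) ↔
          (∀ k', q j k' = true → (false : Bool) = true)) := by
  refine ⟨⟨?_, ?_⟩, fun k h j => stmt10_aux q k h j⟩
  · intro hinj k
    by_contra hne
    have := hinj (fun k' => decide (k' = k)) (fun _ => false)
      (fun j => stmt10_aux q k hne j)
    have hk := congrFun this k
    simp at hk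
  · intro hcomp α α' h
    funext k
    obtain ⟨j, hj⟩ := hcomp k
    have hiff := h j
    rw [hj] at hiff
    have h1 : (∀ k', (decide (k' = k) : Bool) = true → α k' = true) ↔ α k = true := by
      constructor
      · intro hh; exact hh k (by simp)
      · intro hh k' hk'; have : k' = k := of_decide_eq_true hk'; subst this; exact hh
    have h2 : (∀ k', (decide (k' = k) : Bool) = true → α' k' = true) ↔ α' k = true := by
      constructor
      · intro hh; exact hh k (by simp)
      · intro hh k' hk'; have : k' = k := of_decide_eq_true hk'; subst this; exact hh
    have : α k = true ↔ α' k = true := by rw [← h1, ← h2]; exact hiff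
    cases hα : α k <;> cases hα' : α' k <;> simp [hα, hα'] at this ⊢
end

section
/- Consider two two-parameter restricted latent class models on the same Γ ∈ {0,1}^{J×A} with strictly positive probability vectors p, p̄ on A and parameters satisfying θ_h^+ > θ_h^- and θ̄_h^+ > θ̄_h^- for all items h. Suppose the two models induce the same response distribution (Σ_α p_α ∏_{j: r_j=1} θ_{j,α} = Σ_α p̄_α ∏_{j: r_j=1} θ̄_{j,α} for all r ∈ {0,1}^J). Let S ⊆ {1,…,J} be a set of items on which the parameters agree: θ_h^+ = θ̄_h^+ and θ_h^- = θ̄_h^- for all h ∈ S. Suppose item j ∉ S is S-differentiable: there exist subsets S^+, S^- ⊆ S with C_{S^+} ⊊ C_{S^-} and C_{S^-} \ C_{S^+} ⊆ A \ C_j, where C_T = {α : Γ_{h,α}=1 for all h ∈ T}. Then θ_j^- = θ̄_j^-. -/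
/-- Sequential differentiation: if the item parameters of the two models agree
on a set S and item j ∉ S is S-differentiable, then θ_j^- is identifiable. -/
theorem stmt15 {J : ℕ} {A : Type*} [Fintype A]
    (Γ : Fin J → A → Bool)
    (θp θm θbp θbm : Fin J → ℝ)
    (hθ : ∀ h, θm h < θp h) (hθb : ∀ h, θbm h < θbp h)
    (p pbar : A → ℝ)
    (hp : ∀ α, 0 < p α) (hp1 : ∑ α, p α = 1)
    (hpb : ∀ α, 0 < pbar α) (hpb1 : ∑ α, pbar α = 1)
    (hdist : ∀ r : Fin J → Bool,
      ∑ α, p α * ∏ j, (if r j then (if Γ j α then θp j else θm j) else 1) =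
      ∑ α, pbar α * ∏ j, (if r j then (if Γ j α then θbp j else θbm j) else 1))
    (S : Finset (Fin J))
    (hagree : ∀ h ∈ S, θp h = θbp h ∧ θm h = θbm h)
    (j : Fin J) (hj : j ∉ S)
    (Sp Sm : Finset (Fin J)) (hSp : Sp ⊆ S) (hSm : Sm ⊆ S)
    (hsub : ∀ α : A, (∀ h ∈ Sp, Γ h α = true) → (∀ h ∈ Sm, Γ h α = true))
    (hproper : ∃ α : A, (∀ h ∈ Sm, Γ h α = true) ∧ ¬ (∀ h ∈ Sp, Γ h α = true))
    (hdiff : ∀ α : A, (∀ h ∈ Sm, Γ h α = true) → ¬ (∀ h ∈ Sp, Γ h α = true) →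
      Γ j α = false) :
    θm j = θbm j := by
  classical
  set θf : Fin J → A → ℝ := fun h α => if Γ h α then θp h else θm h with hθfdef
  set θbf : Fin J → A → ℝ := fun h α => if Γ h α then θbp h else θbm h with hθbfdef
  -- key: equality of all "moments"
  have key : ∀ R : Finset (Fin J),
      ∑ α, p α * ∏ h ∈ R, θf h α = ∑ α, pbar α * ∏ h ∈ R, θbf h α := by
    intro R
    have h := hdist (fun h => decide (h ∈ R))
    simpa [θf, θbf, Finset.prod_ite_mem] using h
  -- expansion lemma
  have expand : ∀ (c : A → ℝ) (x : Fin J → A → ℝ) (y : Fin J → ℝ) (w : A → ℝ)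
      (T : Finset (Fin J)),
      ∑ α, c α * ((∏ h ∈ T, (x h α - y h)) * w α)
        = ∑ t ∈ T.powerset, (∏ h ∈ T \ t, (-y h)) *
            ∑ α, c α * ((∏ h ∈ t, x h α) * w α) := by
    intro c x y w T
    have hprod : ∀ α : A, (∏ h ∈ T, (x h α - y h))
        = ∑ t ∈ T.powerset, (∏ h ∈ t, x h α) * ∏ h ∈ T \ t, (-y h) := by
      intro α
      simpa [sub_eq_add_neg] using Finset.prod_add (fun h => x h α) (fun h => -y h) T
    calc ∑ α, c α * ((∏ h ∈ T, (x h α - y h)) * w α)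
        = ∑ α, ∑ t ∈ T.powerset,
            (∏ h ∈ T \ t, (-y h)) * (c α * ((∏ h ∈ t, x h α) * w α)) := by
          refine Finset.sum_congr rfl fun α _ => ?_
          rw [hprod α, Finset.sum_mul, Finset.mul_sum]
          exact Finset.sum_congr rfl fun t _ => by ring
      _ = _ := by
          rw [Finset.sum_comm]
          exact Finset.sum_congr rfl fun t _ => (Finset.mul_sum _ _ _).symm
  -- agreement on S
  have hfa : ∀ h ∈ S, ∀ α, θf h α = θbf h α := by
    intro h hh α
    simp only [θf, θbf]
    rcases hagree h hh with ⟨h1, h2⟩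
    split <;> simp [h1, h2]
  -- main: for T ⊆ S and any "weight" pair (w, wb) compatible with key
  have main : ∀ T : Finset (Fin J), T ⊆ S → ∀ w wb : A → ℝ,
      (∀ t : Finset (Fin J), t ⊆ T →
        ∑ α, p α * ((∏ h ∈ t, θf h α) * w α)
          = ∑ α, pbar α * ((∏ h ∈ t, θbf h α) * wb α)) →
      ∑ α, p α * ((∏ h ∈ T, (θf h α - θm h)) * w α)
        = ∑ α, pbar α * ((∏ h ∈ T, (θbf h α - θbm h)) * wb α) := by
    intro T hTS w wb hkey
    rw [expand p θf θm w T, expand pbar θbf θbm wb T]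
    refine Finset.sum_congr rfl fun t ht => ?_
    rw [Finset.mem_powerset] at ht
    have hconst : (∏ h ∈ T \ t, (-θm h)) = ∏ h ∈ T \ t, (-θbm h) := by
      refine Finset.prod_congr rfl fun h hh => ?_
      have := (hagree h (hTS (Finset.mem_sdiff.mp hh).1)).2
      rw [this]
    rw [hconst, hkey t ht]
  -- the weight hypotheses
  have hw1 : ∀ T : Finset (Fin J), T ⊆ S →
      ∀ t : Finset (Fin J), t ⊆ T →
        ∑ α, p α * ((∏ h ∈ t, θf h α) * (1 : ℝ))
          = ∑ α, pbar α * ((∏ h ∈ t, θbf h α) * 1) := by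
    intro T hTS t ht
    simpa using key t
  have hwj : ∀ T : Finset (Fin J), T ⊆ S →
      ∀ t : Finset (Fin J), t ⊆ T →
        ∑ α, p α * ((∏ h ∈ t, θf h α) * θf j α)
          = ∑ α, pbar α * ((∏ h ∈ t, θbf h α) * θbf j α) := by
    intro T hTS t ht
    have hjt : j ∉ t := fun hmem => hj (hTS (ht hmem))
    have := key (insert j t)
    simp only [Finset.prod_insert hjt] at this
    calc ∑ α, p α * ((∏ h ∈ t, θf h α) * θf j α)
        = ∑ α, p α * (θf j α * ∏ h ∈ t, θf h α) := by
          exact Finset.sum_congr rfl fun α _ => by ring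
      _ = ∑ α, pbar α * (θbf j α * ∏ h ∈ t, θbf h α) := this
      _ = _ := Finset.sum_congr rfl fun α _ => by ring
  -- indicator structure of the products
  have hind : ∀ (T : Finset (Fin J)) (u v : Fin J → ℝ) (α : A),
      (∏ h ∈ T, ((if Γ h α then u h else v h) - v h))
        = if (∀ h ∈ T, Γ h α = true) then (∏ h ∈ T, (u h - v h)) else 0 := by
    intro T u v α
    by_cases hα : ∀ h ∈ T, Γ h α = true
    · rw [if_pos hα]
      exact Finset.prod_congr rfl fun h hh => by rw [hα h hh]; simp
    · rw [if_neg hα]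
      push_neg at hα
      obtain ⟨h0, hh0, hΓ⟩ := hα
      refine Finset.prod_eq_zero hh0 ?_
      have : Γ h0 α = false := by simpa using hΓ
      simp [this]
  -- conversion to filtered sums
  have conv : ∀ (c w : A → ℝ) (Q : A → Prop) [DecidablePred Q] (k : ℝ),
      ∑ α, c α * ((if Q α then k else 0) * w α)
        = k * ∑ α ∈ Finset.univ.filter Q, c α * w α := by
    intro c w Q _ k
    rw [Finset.mul_sum, Finset.sum_filter]
    exact Finset.sum_congr rfl fun α _ => by split <;> ring
  have conv0 : ∀ (c : A → ℝ) (Q : A → Prop) [DecidablePred Q] (k : ℝ),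
      ∑ α, c α * (if Q α then k else 0)
        = k * ∑ α ∈ Finset.univ.filter Q, c α := by
    intro c Q _ k
    rw [Finset.mul_sum, Finset.sum_filter]
    exact Finset.sum_congr rfl fun α _ => by split <;> ring
  set Qm : A → Prop := fun α => ∀ h ∈ Sm, Γ h α = true with hQm
  set Qp : A → Prop := fun α => ∀ h ∈ Sp, Γ h α = true with hQp
  set Cm : Finset A := Finset.univ.filter Qm with hCm
  set Cp : Finset A := Finset.univ.filter Qp with hCp
  set cm : ℝ := ∏ h ∈ Sm, (θp h - θm h) with hcm
  set cp : ℝ := ∏ h ∈ Sp, (θp h - θm h) with hcp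
  have hcmpos : 0 < cm := Finset.prod_pos fun h _ => sub_pos.2 (hθ h)
  have hcppos : 0 < cp := Finset.prod_pos fun h _ => sub_pos.2 (hθ h)
  -- bar constants coincide with the unbarred ones on subsets of S
  have hbarcm : (∏ h ∈ Sm, (θbp h - θbm h)) = cm := by
    refine Finset.prod_congr rfl fun h hh => ?_
    rcases hagree h (hSm hh) with ⟨h1, h2⟩; rw [h1, h2]
  have hbarcp : (∏ h ∈ Sp, (θbp h - θbm h)) = cp := by
    refine Finset.prod_congr rfl fun h hh => ?_
    rcases hagree h (hSp hh) with ⟨h1, h2⟩; rw [h1, h2]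
  have hPm : ∀ α, (∏ h ∈ Sm, (θf h α - θm h)) = if Qm α then cm else 0 := fun α =>
    hind Sm θp θm α
  have hPp : ∀ α, (∏ h ∈ Sp, (θf h α - θm h)) = if Qp α then cp else 0 := fun α =>
    hind Sp θp θm α
  have hPmb : ∀ α, (∏ h ∈ Sm, (θbf h α - θbm h)) = if Qm α then cm else 0 := fun α => by
    rw [hind Sm θbp θbm α, hbarcm]
  have hPpb : ∀ α, (∏ h ∈ Sp, (θbf h α - θbm h)) = if Qp α then cp else 0 := fun α => by
    rw [hind Sp θbp θbm α, hbarcp]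
  -- the four equations
  have E1 : ∑ α ∈ Cm, p α = ∑ α ∈ Cm, pbar α := by
    have h := main Sm hSm 1 1 (hw1 Sm hSm)
    simp only [Pi.one_apply] at h
    simp_rw [hPm, hPmb, mul_one] at h
    rw [conv0 p Qm cm, conv0 pbar Qm cm] at h
    exact mul_left_cancel₀ (ne_of_gt hcmpos) h
  have E2 : ∑ α ∈ Cp, p α = ∑ α ∈ Cp, pbar α := by
    have h := main Sp hSp 1 1 (hw1 Sp hSp)
    simp only [Pi.one_apply] at h
    simp_rw [hPp, hPpb, mul_one] at h
    rw [conv0 p Qp cp, conv0 pbar Qp cp] at h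
    exact mul_left_cancel₀ (ne_of_gt hcppos) h
  have E3 : ∑ α ∈ Cm, p α * θf j α = ∑ α ∈ Cm, pbar α * θbf j α := by
    have h := main Sm hSm (fun α => θf j α) (fun α => θbf j α) (hwj Sm hSm)
    simp_rw [hPm, hPmb] at h
    rw [conv p (fun α => θf j α) Qm cm, conv pbar (fun α => θbf j α) Qm cm] at h
    exact mul_left_cancel₀ (ne_of_gt hcmpos) h
  have E4 : ∑ α ∈ Cp, p α * θf j α = ∑ α ∈ Cp, pbar α * θbf j α := by
    have h := main Sp hSp (fun α => θf j α) (fun α => θbf j α) (hwj Sp hSp)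
    simp_rw [hPp, hPpb] at h
    rw [conv p (fun α => θf j α) Qp cp, conv pbar (fun α => θbf j α) Qp cp] at h
    exact mul_left_cancel₀ (ne_of_gt hcppos) h
  -- pass to the difference set D = Cm \ Cp
  have hCsub : Cp ⊆ Cm := by
    intro α hα
    simp only [hCp, hCm, Finset.mem_filter, Finset.mem_univ, true_and] at *
    exact hsub α hα
  set D : Finset A := Cm \ Cp with hD
  have d1 : ∑ α ∈ D, p α = ∑ α ∈ D, pbar α := by
    have h1 := Finset.sum_sdiff (f := p) hCsub
    have h2 := Finset.sum_sdiff (f := pbar) hCsub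
    rw [← hD] at h1 h2
    linarith
  have d3 : ∑ α ∈ D, p α * θf j α = ∑ α ∈ D, pbar α * θbf j α := by
    have h1 := Finset.sum_sdiff (f := fun α => p α * θf j α) hCsub
    have h2 := Finset.sum_sdiff (f := fun α => pbar α * θbf j α) hCsub
    rw [← hD] at h1 h2
    linarith
  -- on D the item j parameters are the minus ones
  have hDval : ∀ α ∈ D, θf j α = θm j ∧ θbf j α = θbm j := by
    intro α hα
    rw [hD, Finset.mem_sdiff, hCm, hCp] at hα
    simp only [Finset.mem_filter, Finset.mem_univ, true_and] at hα
    have hΓ : Γ j α = false := hdiff α hα.1 hα.2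
    constructor <;> simp [θf, θbf, hΓ]
  have d3' : θm j * ∑ α ∈ D, p α = θbm j * ∑ α ∈ D, pbar α := by
    calc θm j * ∑ α ∈ D, p α = ∑ α ∈ D, p α * θf j α := by
          rw [Finset.mul_sum]
          exact Finset.sum_congr rfl fun α hα => by rw [(hDval α hα).1]; ring
      _ = ∑ α ∈ D, pbar α * θbf j α := d3
      _ = θbm j * ∑ α ∈ D, pbar α := by
          rw [Finset.mul_sum]
          exact Finset.sum_congr rfl fun α hα => by rw [(hDval α hα).2]; ring
  -- D is nonempty, so the common mass is positive
  obtain ⟨α0, hα01, hα02⟩ := hproper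
  have hα0D : α0 ∈ D := by
    rw [hD, Finset.mem_sdiff, hCm, hCp]
    simp only [Finset.mem_filter, Finset.mem_univ, true_and]
    exact ⟨hα01, hα02⟩
  have hMpos : 0 < ∑ α ∈ D, p α :=
    Finset.sum_pos (fun α _ => hp α) ⟨α0, hα0D⟩
  rw [← d1] at d3'
  exact mul_right_cancel₀ (ne_of_gt hMpos) d3'
end
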